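/- The 7-dimensional real Lie algebra spanned by X¹,…,X⁷ has trivial center: if c₁,…,c₇ ∈ ℝ and the vector field Y = c₁X¹ + c₂X² + c₃X³ + c₄X⁴ + c₅X⁵ + c₆X⁶ + c₇X⁷ satisfies [Y, Xⁱ] = 0 (as vector fields on ℂ³) for every i ∈ {1,…,7}, then c₁ = c₂ = c₃ = c₄ = c₅ = c₆ = c₇ = 0. -/

import Mathlib

open Complex

noncomputable section

def X1 : ℂ × ℂ × ℂ → ℂ × ℂ × ℂ := fun _ => (0, 0, I)
def X2 : ℂ × ℂ × ℂ → ℂ × ℂ × ℂ := fun p => (p.1, 0, 2 * p.2.2)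
def X3 : ℂ × ℂ × ℂ → ℂ × ℂ × ℂ := fun p => (I * p.1, 2 * I * p.2.1, 0)
def X4 : ℂ × ℂ × ℂ → ℂ × ℂ × ℂ := fun p => (p.2.1 - 1, 0, -2 * p.1)
def X5 : ℂ × ℂ × ℂ → ℂ × ℂ × ℂ := fun p => (I + I * p.2.1, 0, -2 * I * p.1)
def X6 : ℂ × ℂ × ℂ → ℂ × ℂ × ℂ := fun p => (p.1 * p.2.1, p.2.1 ^ 2 - 1, -p.1 ^ 2)
def X7 : ℂ × ℂ × ℂ → ℂ × ℂ × ℂ := fun p => (I * p.1 * p.2.1, I * p.2.1 ^ 2 + I, -I * p.1 ^ 2)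

def Xfield : Fin 7 → (ℂ × ℂ × ℂ → ℂ × ℂ × ℂ) := ![X1, X2, X3, X4, X5, X6, X7]

def P1 : (ℂ × ℂ × ℂ) →L[ℂ] ℂ := ContinuousLinearMap.fst ℂ ℂ (ℂ × ℂ)
def P2 : (ℂ × ℂ × ℂ) →L[ℂ] ℂ :=
  (ContinuousLinearMap.fst ℂ ℂ ℂ).comp (ContinuousLinearMap.snd ℂ ℂ (ℂ × ℂ))
def P3 : (ℂ × ℂ × ℂ) →L[ℂ] ℂ :=
  (ContinuousLinearMap.snd ℂ ℂ ℂ).comp (ContinuousLinearMap.snd ℂ ℂ (ℂ × ℂ))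

lemma keyC (a b c d e f g : ℂ) :
    HasFDerivAt (fun p : ℂ × ℂ × ℂ =>
      a + b * p.1 + c * p.2.1 + d * p.2.2 + e * (p.1 * p.2.1) + f * (p.2.1 * p.2.1) + g * (p.1 * p.1))
      (b • P1 + c • P2 + d • P3) (0 : ℂ × ℂ × ℂ) := by
  have h1 : HasFDerivAt (fun p : ℂ × ℂ × ℂ => p.1) P1 (0 : ℂ × ℂ × ℂ) := hasFDerivAt_fst
  have h2 : HasFDerivAt (fun p : ℂ × ℂ × ℂ => p.2.1) P2 (0 : ℂ × ℂ × ℂ) :=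
    hasFDerivAt_fst.comp _ hasFDerivAt_snd
  have h3 : HasFDerivAt (fun p : ℂ × ℂ × ℂ => p.2.2) P3 (0 : ℂ × ℂ × ℂ) :=
    hasFDerivAt_snd.comp _ hasFDerivAt_snd
  have H := ((((((hasFDerivAt_const a (0 : ℂ × ℂ × ℂ)).add (h1.const_mul b)).add
    (h2.const_mul c)).add (h3.const_mul d)).add ((h1.mul h2).const_mul e)).add
    ((h2.mul h2).const_mul f)).add ((h1.mul h1).const_mul g)
  refine H.congr_fderiv ?_
  ext <;> simp [P1, P2, P3]

abbrev T (a b c d e f g : ℂ) : ℂ × ℂ × ℂ → ℂ :=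
  fun p => a + b * p.1 + c * p.2.1 + d * p.2.2 + e * (p.1 * p.2.1) + f * (p.2.1 * p.2.1)
    + g * (p.1 * p.1)

abbrev L (b c d : ℂ) : (ℂ × ℂ × ℂ) →L[ℂ] ℂ := b • P1 + c • P2 + d • P3

/-- The `7`-dimensional real Lie algebra spanned by `X¹, …, X⁷` has trivial center:
a real linear combination commuting with all the `Xⁱ` is zero. -/
theorem Xfield_center_trivial (c1 c2 c3 c4 c5 c6 c7 : ℝ) (Y : ℂ × ℂ × ℂ → ℂ × ℂ × ℂ)
    (hY : Y = fun p => c1 • X1 p + c2 • X2 p + c3 • X3 p + c4 • X4 p + c5 • X5 p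
      + c6 • X6 p + c7 • X7 p)
    (hcomm : ∀ i : Fin 7, VectorField.lieBracket ℂ Y (Xfield i) = 0) :
    c1 = 0 ∧ c2 = 0 ∧ c3 = 0 ∧ c4 = 0 ∧ c5 = 0 ∧ c6 = 0 ∧ c7 = 0 := by
  have hY' : Y = fun p => (T (-c4 + c5 * I) (c2 + c3 * I) (c4 + c5 * I) 0 (c6 + c7 * I) 0 0 p,
      T (-c6 + c7 * I) 0 (2 * c3 * I) 0 0 (c6 + c7 * I) 0 p,
      T (c1 * I) (-2 * c4 - 2 * c5 * I) 0 (2 * c2) 0 0 (-c6 - c7 * I) p) := by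
    funext p
    simp only [hY, X1, X2, X3, X4, X5, X6, X7, Prod.smul_mk, Prod.mk_add_mk, smul_eq_mul,
      Complex.real_smul, T, Prod.mk.injEq]
    refine ⟨by ring, by ring, by ring⟩
  have hdY : HasFDerivAt Y
      (((L (c2 + c3 * I) (c4 + c5 * I) 0)).prod
        ((L 0 (2 * c3 * I) 0).prod (L (-2 * c4 - 2 * c5 * I) 0 (2 * c2)))) 0 := by
    rw [hY']
    exact HasFDerivAt.prodMk (keyC _ _ _ _ _ _ _) (HasFDerivAt.prodMk (keyC _ _ _ _ _ _ _) (keyC _ _ _ _ _ _ _))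
  have hdX2 : HasFDerivAt X2 ((L 1 0 0).prod ((L 0 0 0).prod (L 0 0 2))) 0 := by
    have h : X2 = fun p => (T 0 1 0 0 0 0 0 p, T 0 0 0 0 0 0 0 p, T 0 0 0 2 0 0 0 p) := by
      funext p; simp only [X2, T, Prod.mk.injEq]; refine ⟨by ring, by ring, by ring⟩
    rw [h]
    exact HasFDerivAt.prodMk (keyC _ _ _ _ _ _ _) (HasFDerivAt.prodMk (keyC _ _ _ _ _ _ _) (keyC _ _ _ _ _ _ _))
  have hdX3 : HasFDerivAt X3 ((L I 0 0).prod ((L 0 (2*I) 0).prod (L 0 0 0))) 0 := by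
    have h : X3 = fun p => (T 0 I 0 0 0 0 0 p, T 0 0 (2*I) 0 0 0 0 p, T 0 0 0 0 0 0 0 p) := by
      funext p; simp only [X3, T, Prod.mk.injEq]; refine ⟨by ring, by ring, by ring⟩
    rw [h]
    exact HasFDerivAt.prodMk (keyC _ _ _ _ _ _ _) (HasFDerivAt.prodMk (keyC _ _ _ _ _ _ _) (keyC _ _ _ _ _ _ _))
  have hdX4 : HasFDerivAt X4 ((L 0 1 0).prod ((L 0 0 0).prod (L (-2) 0 0))) 0 := by
    have h : X4 = fun p => (T (-1) 0 1 0 0 0 0 p, T 0 0 0 0 0 0 0 p, T 0 (-2) 0 0 0 0 0 p) := by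
      funext p; simp only [X4, T, Prod.mk.injEq]; refine ⟨by ring, by ring, by ring⟩
    rw [h]
    exact HasFDerivAt.prodMk (keyC _ _ _ _ _ _ _) (HasFDerivAt.prodMk (keyC _ _ _ _ _ _ _) (keyC _ _ _ _ _ _ _))
  have hY0 : Y 0 = (-c4 + c5 * I, -c6 + c7 * I, c1 * I) := by
    rw [hY']; simp [T]
  have hdX1 : HasFDerivAt X1 (0 : (ℂ × ℂ × ℂ) →L[ℂ] ℂ × ℂ × ℂ) 0 :=
    hasFDerivAt_const ((0 : ℂ), (0 : ℂ), I) 0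
  have e1 := congrFun (hcomm 0) 0
  have e2 := congrFun (hcomm 1) 0
  have e3 := congrFun (hcomm 2) 0
  have e4 := congrFun (hcomm 3) 0
  simp only [VectorField.lieBracket, Xfield, Matrix.cons_val_zero, Matrix.cons_val_one,
    Matrix.head_cons, Matrix.cons_val_two, Matrix.tail_cons, Matrix.cons_val_three,
    hdY.fderiv, hdX1.fderiv, hdX2.fderiv, hdX3.fderiv, hdX4.fderiv, hY0, X1, X2, X3, X4,
    ContinuousLinearMap.prod_apply, ContinuousLinearMap.add_apply,
    ContinuousLinearMap.coe_smul', Pi.smul_apply, P1, P2, P3,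
    ContinuousLinearMap.coe_comp', Function.comp_apply, ContinuousLinearMap.coe_fst',
    ContinuousLinearMap.coe_snd', smul_eq_mul, ContinuousLinearMap.zero_apply,
    Prod.mk_sub_mk, Prod.ext_iff, Pi.zero_apply, Prod.fst_zero, Prod.snd_zero,
    Complex.ext_iff] at e1 e2 e3 e4
  norm_num [Complex.ext_iff, Complex.add_re, Complex.add_im, Complex.mul_re, Complex.mul_im,
    Complex.sub_re, Complex.sub_im, Complex.I_re, Complex.I_im, Complex.ofReal_re,
    Complex.ofReal_im, Complex.neg_re, Complex.neg_im] at e1 e2 e3 e4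
  refine ⟨e2.2, e1, ?_, e2.1.1, e2.1.2, e3.2.2, e3.2.1⟩
  linarith [e4.1.2, e3.2.1]
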